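/- Let g(z) = z·(1 - conj(p)²z²)(1 - conj(q)²z²) / ((z² - p²)(z² - q²)) and dh(z)dz with dh(z) = i·(1 - conj(p)²z²)(1 - conj(q)²z²)(z² - p²)(z² - q²) / (z(z² - 1)⁴), where p, q ∈ ℂ are nonzero with p²q² = iλ for some λ ∈ ℝ \ {0}, and p², q² ∉ {0, 1}. Then: (1) g'/g has a simple pole at 0 with residue 1; (2) dh has a simple pole at 0 with residue i·p²q² = -λ ∈ ℝ \ {0}; (3) consequently the quadratic differential Q = -(1/2)(g'/g)·dh·dz² has a pole of order two at 0 with lim_{z→0} z²·(coefficient of Q) = -i p² q²/2 = λ/2, a nonzero real number. -/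

import Mathlib

open Filter Topology Complex

/-- For the Weierstrass data
`g(z) = z(1 - conj p² z²)(1 - conj q² z²) / ((z² - p²)(z² - q²))` and the height differential
coefficient
`dh(z) = i(1 - conj p² z²)(1 - conj q² z²)(z² - p²)(z² - q²) / (z(z² - 1)⁴)`,
with `p, q ≠ 0`, `p²q² = iλ`, `λ` real nonzero, `p², q² ∉ {0, 1}`:
(1) `g'/g` has a simple pole at `0` with residue `1`;
(2) `dh` has a simple pole at `0` with residue `i p² q² = -λ`, a nonzero real;
(3) the Hopf-differential coefficient `-(1/2)(g'/g)·dh` has a pole of order two at `0` with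
quadratic limit `-i p² q²/2 = λ/2`, a nonzero real. -/
theorem closed_curvature_line_at_catenoidal_end
    (p q : ℂ) (lam : ℝ) (hlam : lam ≠ 0)
    (hp : p ≠ 0) (hq : q ≠ 0) (hp1 : p ^ 2 ≠ 1) (hq1 : q ^ 2 ≠ 1)
    (hpq : p ^ 2 * q ^ 2 = I * lam)
    (g dh : ℂ → ℂ)
    (hg : ∀ z : ℂ, g z =
      z * (1 - (starRingEnd ℂ) p ^ 2 * z ^ 2) * (1 - (starRingEnd ℂ) q ^ 2 * z ^ 2) /
        ((z ^ 2 - p ^ 2) * (z ^ 2 - q ^ 2)))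
    (hdh : ∀ z : ℂ, dh z =
      I * ((1 - (starRingEnd ℂ) p ^ 2 * z ^ 2) * (1 - (starRingEnd ℂ) q ^ 2 * z ^ 2) *
          (z ^ 2 - p ^ 2) * (z ^ 2 - q ^ 2)) /
        (z * (z ^ 2 - 1) ^ 4)) :
    Tendsto (fun z : ℂ => z * deriv g z / g z) (𝓝[≠] (0 : ℂ)) (𝓝 1) ∧
      (Tendsto (fun z : ℂ => z * dh z) (𝓝[≠] (0 : ℂ)) (𝓝 (I * p ^ 2 * q ^ 2)) ∧
        I * p ^ 2 * q ^ 2 = (-lam : ℝ) ∧ (-lam : ℝ) ≠ 0) ∧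
      (Tendsto (fun z : ℂ => z ^ 2 * (-(1 / 2) * (deriv g z / g z) * dh z))
          (𝓝[≠] (0 : ℂ)) (𝓝 (-(I * p ^ 2 * q ^ 2) / 2)) ∧
        -(I * p ^ 2 * q ^ 2) / 2 = ((lam / 2 : ℝ) : ℂ) ∧ (lam / 2 : ℝ) ≠ 0) := by
  have hpq2 : p ^ 2 * q ^ 2 ≠ 0 := by
    rw [hpq]; simp [I_ne_zero, hlam]
  set N : ℂ → ℂ := fun z =>
    (1 - (starRingEnd ℂ) p ^ 2 * z ^ 2) * (1 - (starRingEnd ℂ) q ^ 2 * z ^ 2) with hN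
  set D : ℂ → ℂ := fun z => (z ^ 2 - p ^ 2) * (z ^ 2 - q ^ 2) with hD
  set h : ℂ → ℂ := fun z => N z / D z with hh
  have hD0 : D 0 ≠ 0 := by simp [hD]; exact ⟨hp, hq⟩
  have hN0 : N 0 = 1 := by simp [hN]
  have hh0 : h 0 ≠ 0 := by
    simp [hh, hN0]
    exact fun H => hD0 (by simp [H])
  -- analyticity of N and D
  have haN : AnalyticAt ℂ N 0 := by
    apply AnalyticAt.mul <;>
      exact (analyticAt_const).sub ((analyticAt_const).mul ((analyticAt_id).pow 2))
  have haD : AnalyticAt ℂ D 0 := by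
    apply AnalyticAt.mul <;>
      exact ((analyticAt_id).pow 2).sub analyticAt_const
  have hah : AnalyticAt ℂ h 0 := haN.div haD hD0
  -- g = fun z => z * h z
  have hgf : g = fun z => z * h z := by
    funext w
    rw [hg w, hh]
    simp only [hN, hD]
    ring
  -- D z ≠ 0 eventually near 0 (in 𝓝)
  have hDcont : Continuous D := by
    apply Continuous.mul <;> fun_prop
  have hDne : ∀ᶠ z in 𝓝 (0 : ℂ), D z ≠ 0 :=
    hDcont.continuousAt.eventually_ne hD0
  have hhne : ∀ᶠ z in 𝓝 (0 : ℂ), h z ≠ 0 := by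
    have hNcont : Continuous N := by
      apply Continuous.mul <;> fun_prop
    have hNne : ∀ᶠ z in 𝓝 (0 : ℂ), N z ≠ 0 :=
      hNcont.continuousAt.eventually_ne (by rw [hN0]; exact one_ne_zero)
    filter_upwards [hDne, hNne] with z h1 h2
    exact div_ne_zero h2 h1
  -- h differentiable where D ≠ 0
  have hdiff : ∀ z : ℂ, D z ≠ 0 → DifferentiableAt ℂ h z := by
    intro z hz
    apply DifferentiableAt.div
    · apply DifferentiableAt.mul <;> fun_prop
    · apply DifferentiableAt.mul <;> fun_prop
    · exact hz
  -- deriv g z = h z + z * deriv h z where D z ≠ 0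
  have hderivg : ∀ z : ℂ, D z ≠ 0 → deriv g z = h z + z * deriv h z := by
    intro z hz
    rw [hgf]
    have := ((hasDerivAt_id z).mul ((hdiff z hz).hasDerivAt)).deriv
    simp only [id_eq] at this
    rw [show (fun z => z * h z) = id * h from rfl, this]; ring
  -- fun_prop of deriv h at 0
  have hderivh_cont : ContinuousAt (deriv h) 0 := by
    have hfd : AnalyticAt ℂ (fderiv ℂ h) 0 := hah.fderiv
    have : ContinuousAt (fun z => fderiv ℂ h z 1) 0 :=
      ((ContinuousLinearMap.apply ℂ ℂ (1 : ℂ)).continuous.continuousAt).comp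
        hfd.continuousAt
    have heq : (fun z => fderiv ℂ h z 1) = deriv h := by
      funext z; exact fderiv_apply_one_eq_deriv
    rwa [heq] at this
  -- Part 1
  have part1 : Tendsto (fun z : ℂ => z * deriv g z / g z) (𝓝[≠] (0 : ℂ)) (𝓝 1) := by
    have hlim : Tendsto (fun z : ℂ => 1 + z * deriv h z / h z) (𝓝 (0 : ℂ))
        (𝓝 (1 + 0 * deriv h 0 / h 0)) := by
      apply Tendsto.add tendsto_const_nhds
      exact ((continuousAt_id.mul hderivh_cont).div
        (hah.continuousAt) hh0)
    rw [show (1 : ℂ) + 0 * deriv h 0 / h 0 = 1 by ring] at hlim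
    apply Tendsto.congr' _ (hlim.mono_left nhdsWithin_le_nhds)
    have : ∀ᶠ z in 𝓝[≠] (0 : ℂ), D z ≠ 0 ∧ h z ≠ 0 ∧ z ≠ 0 := by
      filter_upwards [nhdsWithin_le_nhds hDne, nhdsWithin_le_nhds hhne,
        self_mem_nhdsWithin] with z h1 h2 h3
      exact ⟨h1, h2, h3⟩
    filter_upwards [this] with z ⟨h1, h2, h3⟩
    rw [hderivg z h1, hgf]
    field_simp
  -- Part 2
  have part2 : Tendsto (fun z : ℂ => z * dh z) (𝓝[≠] (0 : ℂ)) (𝓝 (I * p ^ 2 * q ^ 2)) := by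
    have hlim : Tendsto (fun z : ℂ => I * (N z * D z) / ((z ^ 2 - 1) ^ 4)) (𝓝 (0 : ℂ))
        (𝓝 (I * (N 0 * D 0) / ((0 ^ 2 - 1) ^ 4))) := by
      apply ContinuousAt.div
      · fun_prop
      · fun_prop
      · norm_num
    have hval : I * (N 0 * D 0) / ((0 ^ 2 - 1 : ℂ) ^ 4) = I * p ^ 2 * q ^ 2 := by
      simp [hN0, hD]
      ring
    rw [hval] at hlim
    apply Tendsto.congr' _ (hlim.mono_left nhdsWithin_le_nhds)
    filter_upwards [self_mem_nhdsWithin] with z hz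
    have hz' : (z : ℂ) ≠ 0 := hz
    rw [hdh z, ← mul_div_assoc, mul_div_mul_left _ _ hz']
    simp only [hN, hD]
    ring
  have heq2 : I * p ^ 2 * q ^ 2 = ((-lam : ℝ) : ℂ) := by
    rw [mul_assoc, hpq]
    push_cast
    rw [← mul_assoc, I_mul_I]
    ring
  -- Part 3
  have part3 : Tendsto (fun z : ℂ => z ^ 2 * (-(1 / 2) * (deriv g z / g z) * dh z))
      (𝓝[≠] (0 : ℂ)) (𝓝 (-(I * p ^ 2 * q ^ 2) / 2)) := by
    have := (part1.mul part2).const_mul (-(1 / 2) : ℂ)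
    have hval : (-(1 / 2) : ℂ) * (1 * (I * p ^ 2 * q ^ 2)) = -(I * p ^ 2 * q ^ 2) / 2 := by
      ring
    rw [hval] at this
    apply Tendsto.congr' _ this
    filter_upwards [] with z
    ring
  refine ⟨part1, ⟨part2, heq2, ?_⟩, part3, ?_, ?_⟩
  · push_cast; simpa using hlam
  · rw [heq2]; push_cast; ring
  · simpa using hlam
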